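/- Let V be a type with distinguished empty value ⊥, δ : ℕ, and s : ℕ → V a send stream. Let r : ℕ → V be the receive stream of the FIFO channel with δ initial empty tokens (q 0 = List.replicate δ ⊥, q (n+1) = ((q n) ++ [s n]).tail, r n = ((q n) ++ [s n]).head!), and let D : (ℕ → V) → (ℕ → V) be the unit-delay operator with initial value ⊥ (D s 0 = ⊥, D s (n+1) = s n). Then r = D^[δ] s, i.e. for every n the value received from the distributed FIFO implementation equals the value produced by the centralised cascade of δ unit-delay operators. The distributed and centralised channel implementations produce identical streams. -/

import Mathlib

/-- The distributed channel implementation (a FIFO with `δ` initial empty tokens)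
and the centralised implementation (a cascade of `δ` unit-delay operators)
produce identical receive streams. -/
theorem fifo_eq_iterated_delay {V : Type*} [Inhabited V] (bot : V) (δ : ℕ)
    (s : ℕ → V) (q : ℕ → List V) (r : ℕ → V)
    (hq0 : q 0 = List.replicate δ bot)
    (hq : ∀ n, q (n + 1) = ((q n) ++ [s n]).tail)
    (hr : ∀ n, r n = ((q n) ++ [s n]).head!)
    (D : (ℕ → V) → (ℕ → V))
    (hD0 : ∀ t : ℕ → V, D t 0 = bot)
    (hDs : ∀ (t : ℕ → V) (n : ℕ), D t (n + 1) = t n) :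
    r = D^[δ] s := by
  -- closed form of the delay cascade
  have hDiter : ∀ (k : ℕ) (t : ℕ → V) (n : ℕ),
      D^[k] t n = if n < k then bot else t (n - k) := by
    intro k
    induction k with
    | zero => intro t n; simp
    | succ k ih =>
      intro t n
      rw [Function.iterate_succ_apply']
      cases n with
      | zero => simp [hD0]
      | succ n =>
        rw [hDs, ih]
        simp [Nat.succ_lt_succ_iff, Nat.succ_sub_succ]
  -- closed form of the queue
  have hqn : ∀ n, q n = (List.range δ).map
      (fun i => if n + i < δ then bot else s (n + i - δ)) := by
    intro n
    induction n with
    | zero =>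
      rw [hq0]
      apply List.ext_getElem
      · simp
      · intro i h1 h2
        simp at h1 h2 ⊢
        simp [h2]
    | succ n ih =>
      rw [hq n, ih]
      have : List.range (δ + 1) = 0 :: (List.range δ).map (· + 1) :=
        List.range_succ_eq_map
      have happ : (List.range δ).map (fun i => if n + i < δ then bot else s (n + i - δ))
          ++ [s n]
          = (List.range (δ + 1)).map (fun i => if n + i < δ then bot else s (n + i - δ)) := by
        rw [List.range_succ, List.map_append]
        simp
      rw [happ, this, List.map_cons, List.tail_cons, List.map_map]
      apply List.map_congr_left
      intro i _
      simp only [Function.comp_apply]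
      have h : n + (i + 1) = n + 1 + i := by omega
      rw [h]
  funext n
  rw [hr n, hDiter δ s n, hqn n]
  cases δ with
  | zero => simp
  | succ k =>
    rw [List.range_succ_eq_map, List.map_cons]
    simp only [List.cons_append, List.head!_cons]
    simp
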